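/- Let G be a profinite group, u ∈ G, and let ⟨u⟩ denote the closed procyclic subgroup generated by u. Suppose that for every n ∈ ℤ \ {0}, the normalizer in G of the closure of ⟨uⁿ⟩ equals ⟨u⟩. Let Aut_u(G) be the group of continuous automorphisms of G fixing u, let U be the conjugacy class of u in G, and let Out_U(G) be the stabilizer of U in Out(G). Then the natural homomorphism Aut_u(G)/Inn(⟨u⟩) → Out_U(G) is an isomorphism. -/

import Mathlib

/-- Let `G` be a profinite group and `u ∈ G` such that the normalizer of the closed subgroup
generated by any nonzero power of `u` is the closed procyclic subgroup `⟨u⟩` generated by `u`.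
Then the natural homomorphism `Aut_u(G)/Inn(⟨u⟩) → Out_U(G)` is an isomorphism, where
`Aut_u(G)` is the group of continuous automorphisms fixing `u` and `Out_U(G)` is the stabilizer
in `Out(G)` of the conjugacy class `U` of `u`.  This is expressed below by: (1) surjectivity:
every continuous automorphism preserving the conjugacy class of `u` is, modulo an inner
automorphism, a continuous automorphism fixing `u`; (2) kernel: a continuous automorphism
fixing `u` is inner iff it is inner by an element of the closed subgroup generated by `u`. -/
theorem stmt_4 (G : Type) [Group G] [TopologicalSpace G] [IsTopologicalGroup G]
    [CompactSpace G] [T2Space G] [TotallyDisconnectedSpace G]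
    (u : G)
    (hself : ∀ n : ℤ, n ≠ 0 →
      Subgroup.normalizer ((Subgroup.zpowers (u ^ n)).topologicalClosure : Set G)
        = (Subgroup.zpowers u).topologicalClosure) :
    -- surjectivity onto `Out_U(G)`
    (∀ f : G ≃* G, Continuous f → Continuous f.symm →
        ((f : G → G) '' {g | ∃ x : G, x * u * x⁻¹ = g} = {g | ∃ x : G, x * u * x⁻¹ = g}) →
        ∃ (g : G ≃* G) (x : G), Continuous g ∧ Continuous g.symm ∧ g u = u ∧
          ∀ y : G, f y = x * g y * x⁻¹) ∧
    -- computation of the kernel: `Inn(⟨u⟩)`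
    (∀ f : G ≃* G, Continuous f → Continuous f.symm → f u = u →
        ((∃ x : G, ∀ y : G, f y = x * y * x⁻¹) ↔
          (∃ x ∈ (Subgroup.zpowers u).topologicalClosure, ∀ y : G, f y = x * y * x⁻¹))) := by
  constructor
  · intro f hf hfs hU
    have hu : f u ∈ {g | ∃ x : G, x * u * x⁻¹ = g} := by
      rw [← hU]
      exact ⟨u, ⟨1, by simp⟩, rfl⟩
    obtain ⟨x, hx⟩ := hu
    refine ⟨f.trans (MulAut.conj x⁻¹ : G ≃* G), x, ?_, ?_, ?_, ?_⟩
    · exact Continuous.mul (Continuous.mul continuous_const hf) continuous_const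
    · have h1 : ⇑(f.trans (MulAut.conj x⁻¹ : G ≃* G)).symm
          = fun y => f.symm ((MulAut.conj x⁻¹ : G ≃* G).symm y) := rfl
      rw [h1]
      simp only [MulAut.conj_symm_apply]
      exact hfs.comp (by continuity)
    · show x⁻¹ * f u * x⁻¹⁻¹ = u
      rw [← hx]; group
    · intro y
      show f y = x * (x⁻¹ * f y * x⁻¹⁻¹) * x⁻¹
      group
  · intro f hf hfs hu
    constructor
    · rintro ⟨x, hx⟩
      have hcomm : ∀ g ∈ (Subgroup.zpowers u).topologicalClosure, x * g * x⁻¹ = g := by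
        intro g hg
        have hclosed : IsClosed {g : G | x * g * x⁻¹ = g} :=
          isClosed_eq (by continuity) continuous_id
        have hsub : (Subgroup.zpowers u : Set G) ⊆ {g : G | x * g * x⁻¹ = g} := by
          rintro _ ⟨k, rfl⟩
          have hxu : x * u * x⁻¹ = u := by rw [← hx u]; exact hu
          show x * u ^ k * x⁻¹ = u ^ k
          rw [← conj_zpow, hxu]
        exact hclosed.closure_subset_iff.2 hsub hg
      have hnorm : x ∈ Subgroup.normalizer ((Subgroup.zpowers u).topologicalClosure : Set G) := by
        intro h
        constructor
        · intro hh; rw [hcomm h hh]; exact hh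
        · intro hh
          have := hcomm _ hh
          have : h = x * h * x⁻¹ := by
            have h2 := hcomm _ hh
            calc h = x⁻¹ * (x * h * x⁻¹) * x := by group
              _ = x⁻¹ * (x * (x * h * x⁻¹) * x⁻¹) * x := by rw [h2]
              _ = x * h * x⁻¹ := by group
          rw [this]; exact hh
      have h1 := hself 1 one_ne_zero
      rw [zpow_one] at h1
      rw [h1] at hnorm
      exact ⟨x, hnorm, hx⟩
    · rintro ⟨x, _, hx⟩
      exact ⟨x, hx⟩
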